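/- For all n ≥ 1 and k ≥ 2, there is a bijection between the set of permutations of [n] avoiding 12…k, 132, and 213 and the set of tilings of a 1×n rectangle with tiles of sizes 1×1 through 1×(k−1). -/

import Mathlib

set_option maxHeartbeats 1600000

/-- A permutation `π` of `Fin n` avoids the pattern given (in one-line notation) by the
list `s` when there is no increasing choice of positions along which the values of `π`
have the same pairwise comparisons as the entries of `s`. -/
def AvoidsPat {n : ℕ} (π : Equiv.Perm (Fin n)) (s : List ℕ) : Prop :=
  ¬ ∃ f : Fin s.length ↪o Fin n,
      ∀ i j : Fin s.length, s.get i < s.get j ↔ π (f i) < π (f j)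

/-- The number of permutations of `Fin n` avoiding every pattern in `R`. -/
noncomputable def AvoidCount (R : List (List ℕ)) (n : ℕ) : ℕ :=
  Nat.card {π : Equiv.Perm (Fin n) // ∀ s ∈ R, AvoidsPat π s}

/-- The `k`-generalized Fibonacci numbers: `F_{k,n} = 0` for `n ≤ 0`, `F_{k,1} = 1`,
`F_{k,n} = ∑_{i=1}^{k} F_{k,n-i}` for `n ≥ 2` (terms with nonpositive index are `0`). -/
def genFib (k : ℕ) : ℕ → ℕ
  | 0 => 0
  | 1 => 1
  | n + 2 => ∑ i ∈ Finset.range k, genFib k (n + 1 - i)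

namespace AvoidTilingAux

def Pl : List ℕ → List ℕ
  | [] => []
  | a :: t => List.range' t.sum a ++ Pl t

theorem Pl_length (l : List ℕ) : (Pl l).length = l.sum := by
  induction l with
  | nil => rfl
  | cons a t ih => simp [Pl, ih, Nat.add_comm]

theorem Pl_perm (l : List ℕ) : (Pl l).Perm (List.range l.sum) := by
  induction l with
  | nil => simp [Pl]
  | cons a t ih =>
    simp only [Pl, List.sum_cons]
    refine ((ih.append_left _).trans List.perm_append_comm.symm).trans ?_
    rw [show List.range t.sum ++ List.range' t.sum a = List.range (a + t.sum) by
      rw [List.range_eq_range', List.range_eq_range']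
      simpa [Nat.add_comm] using @List.range'_append 0 t.sum a 1]

theorem Pl_mem_lt (l : List ℕ) {x : ℕ} (hx : x ∈ Pl l) : x < l.sum := by
  have := (Pl_perm l).mem_iff.mp hx
  simpa using this

theorem Pl_PK {K : ℕ} (hK : 1 ≤ K) (l : List ℕ) (hl : ∀ x ∈ l, x ≤ K) :
    ∀ i j (hi : i < (Pl l).length) (hj : j < (Pl l).length), i ≤ j →
      (Pl l)[i] ≤ (Pl l)[j] →
      (Pl l)[j] + i = (Pl l)[i] + j ∧ j < i + K := by
  induction l with
  | nil => intro i j hi; simp [Pl] at hi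
  | cons a t ih =>
    intro i j hi hj hij hval
    have haK : a ≤ K := hl a (by simp)
    have hlt : (List.range' t.sum a).length = a := by simp
    have hi' := hi; have hj' := hj
    simp only [Pl, List.length_append, hlt] at hi' hj'
    have eleft : ∀ m (hm : m < a), (Pl (a :: t))[m]'(by simp [Pl, hlt]; omega) = t.sum + m := by
      intro m hm
      simp only [Pl]
      rw [List.getElem_append_left (by omega)]
      simp [List.getElem_range']
    have eright : ∀ m (hm : a ≤ m) (hm2 : m < a + (Pl t).length),
        (Pl (a :: t))[m]'(by simp [Pl, hlt]; omega) = (Pl t)[m - a]'(by omega) := by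
      intro m hm hm2
      simp only [Pl]
      rw [List.getElem_append_right (by omega)]
      simp [hlt]
    by_cases hja : j < a
    · have hia : i < a := lt_of_le_of_lt hij hja
      rw [eleft i hia, eleft j hja] at hval ⊢
      omega
    · by_cases hia : i < a
      · exfalso
        rw [eleft i hia, eright j (by omega) (by omega)] at hval
        have h2 : (Pl t)[j - a]'(by omega) < t.sum := Pl_mem_lt t (List.getElem_mem _)
        omega
      · rw [eright i (by omega) (by omega), eright j (by omega) (by omega)] at hval ⊢
        have := ih (fun x hx => hl x (by simp [hx])) (i - a) (j - a)
          (by omega) (by omega) (by omega) hval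
        omega


theorem Pl_inj : ∀ l₁ l₂ : List ℕ, (∀ x ∈ l₁, 1 ≤ x) → (∀ x ∈ l₂, 1 ≤ x) →
    l₁.sum = l₂.sum → Pl l₁ = Pl l₂ → l₁ = l₂ := by
  intro l₁
  induction l₁ with
  | nil =>
    intro l₂ _ h2 hsum _
    cases l₂ with
    | nil => rfl
    | cons b t => exfalso; have := h2 b (by simp); simp at hsum; omega
  | cons a t ih =>
    intro l₂ h1 h2 hsum hPl
    cases l₂ with
    | nil => exfalso; have := h1 a (by simp); simp at hsum; omega
    | cons b t' =>
      have ha : 1 ≤ a := h1 a (by simp)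
      have hb : 1 ≤ b := h2 b (by simp)
      -- heads of Pl are t.sum and t'.sum
      have hh : t.sum = t'.sum := by
        have h0 : (Pl (a :: t))[0]'(by simp [Pl]; omega) = t.sum := by
          simp only [Pl]
          rw [List.getElem_append_left (by simp; omega)]
          simp
        have h0' : (Pl (b :: t'))[0]'(by simp [Pl]; omega) = t'.sum := by
          simp only [Pl]
          rw [List.getElem_append_left (by simp; omega)]
          simp
        rw [← h0, ← h0']
        congr 1
      have hab : a = b := by simp at hsum; omega
      subst hab
      have htail : Pl t = Pl t' := by
        simp only [Pl, hh] at hPl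
        exact List.append_cancel_left hPl
      have := ih t' (fun x hx => h1 x (by simp [hx])) (fun x hx => h2 x (by simp [hx]))
        (by simp at hsum; omega) htail
      rw [this]


theorem Pl_surj {K : ℕ} (hK : 1 ≤ K) : ∀ n (L : List ℕ), L.Perm (List.range n) →
    (∀ i j (hi : i < L.length) (hj : j < L.length), i ≤ j → L[i] ≤ L[j] →
        L[j] + i = L[i] + j) →
    (∀ i j (hi : i < L.length) (hj : j < L.length), i ≤ j → L[i] < L[j] → j < i + K) →
    ∃ l : List ℕ, l.sum = n ∧ (∀ x ∈ l, 1 ≤ x ∧ x ≤ K) ∧ Pl l = L := by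
  intro n
  induction n using Nat.strong_induction_on with
  | _ n IH =>
  intro L hLperm hP hKc
  have hlen : L.length = n := by rw [hLperm.length_eq, List.length_range]
  rcases Nat.eq_zero_or_pos n with hn0 | hn0
  · subst hn0
    have : L = [] := List.length_eq_zero_iff.mp hlen
    exact ⟨[], by simp, by simp, by simp [this, Pl]⟩
  · have h0 : 0 < L.length := by omega
    set v0 := L[0]'h0 with hv0
    have hv0n : v0 < n := by
      have : v0 ∈ L := List.getElem_mem _
      simpa using hLperm.mem_iff.mp this
    set a := n - v0 with ha
    have ha1 : 1 ≤ a := by omega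
    -- every value v with v0 ≤ v < n sits at position v - v0
    have hpos : ∀ v, v0 ≤ v → v < n → ∃ (h : v - v0 < L.length), L[v - v0] = v := by
      intro v hv1 hv2
      have hvL : v ∈ L := hLperm.mem_iff.mpr (by simpa using hv2)
      obtain ⟨m, hm, hmv⟩ := List.getElem_of_mem hvL
      have := hP 0 m h0 hm (by omega) (by omega)
      have hm0 : m = v - v0 := by omega
      subst hm0
      exact ⟨hm, hmv⟩
    have htake : L.take a = List.range' v0 a := by
      apply List.ext_getElem
      · simp [hlen]; omega
      · intro i hi1 hi2
        have hia : i < a := by simpa using hi2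
        rw [List.getElem_take]
        obtain ⟨h, hval⟩ := hpos (v0 + i) (by omega) (by omega)
        have hval' : L[i]'(by omega) = v0 + i := by simpa using hval
        rw [List.getElem_range']
        omega
    have hnodup : L.Nodup := hLperm.nodup_iff.mpr (List.nodup_range (n := n))
    have hdrop_lt : ∀ i (h : i < (L.drop a).length), (L.drop a)[i] < v0 := by
      intro i h
      rw [List.getElem_drop]
      have hain : a + i < L.length := by simp at h; omega
      have hx : L[a + i] < n := by
        have : L[a + i] ∈ L := List.getElem_mem _
        simpa using hLperm.mem_iff.mp this
      by_contra hge
      push_neg at hge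
      obtain ⟨hb, hval⟩ := hpos L[a+i] hge hx
      have heq : L[L[a+i] - v0]'hb = L[a+i]'hain := hval
      have hidx := (List.Nodup.getElem_inj_iff hnodup).mp heq
      omega
    -- L.drop a is a permutation of range v0
    have hsplit : L = List.range' v0 a ++ L.drop a := by
      conv_lhs => rw [← List.take_append_drop a L]
      rw [htake]
    have hdropperm : (L.drop a).Perm (List.range v0) := by
      have hr : List.range n = List.range v0 ++ List.range' v0 a := by
        rw [List.range_eq_range', List.range_eq_range']
        rw [show (List.range' 0 v0 ++ List.range' v0 a) = List.range' 0 (a + v0) by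
          simpa [Nat.add_comm] using @List.range'_append 0 v0 a 1]
        congr 1
        omega
      have h1 : (List.range' v0 a ++ L.drop a).Perm (List.range v0 ++ List.range' v0 a) := by
        rw [← hsplit, ← hr]; exact hLperm
      have h2 := h1.trans List.perm_append_comm.symm
      exact (List.perm_append_left_iff _).mp h2
    have hdlen : (L.drop a).length = v0 := by
      rw [hdropperm.length_eq, List.length_range]
    have hgetd : ∀ i (h : i < (L.drop a).length), (L.drop a)[i] = L[a + i]'(by simp at h ⊢; omega) := by
      intro i h
      rw [List.getElem_drop]
    obtain ⟨l', hs', hp', hpl'⟩ := IH v0 (by omega) (L.drop a) hdropperm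
      (by
        intro i j hi hj hij hval
        rw [hgetd i hi, hgetd j hj] at hval ⊢
        have := hP (a+i) (a+j) (by simp at hi; omega) (by simp at hj; omega) (by omega) hval
        omega)
      (by
        intro i j hi hj hij hval
        rw [hgetd i hi, hgetd j hj] at hval
        have := hKc (a+i) (a+j) (by simp at hi; omega) (by simp at hj; omega) (by omega) hval
        omega)
    have haK : a ≤ K := by
      rcases Nat.lt_or_ge a 2 with h2 | h2
      · omega
      · have hb1 : a - 1 < L.length := by omega
        have e0 : L[0]'h0 = v0 := rfl
        have e1 : L[a-1]'hb1 = v0 + (a-1) := by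
          obtain ⟨h, hval⟩ := hpos (v0 + (a-1)) (by omega) (by omega)
          have : v0 + (a-1) - v0 = a - 1 := by omega
          simpa [this] using hval
        have := hKc 0 (a-1) h0 hb1 (by omega) (by omega)
        omega
    refine ⟨a :: l', by simp; omega, ?_, ?_⟩
    · intro x hx
      rcases List.mem_cons.mp hx with h | h
      · omega
      · exact hp' x h
    · show List.range' l'.sum a ++ Pl l' = L
      rw [hpl', hs', ← hsplit]


/-- difference bound for order embeddings -/
theorem orderEmb_le {k n : ℕ} (f : Fin k ↪o Fin n) :
    ∀ d (i j : Fin k), (j : ℕ) = (i : ℕ) + d → (f i : ℕ) + d ≤ (f j : ℕ) := by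
  intro d
  induction d with
  | zero =>
    intro i j h
    have : i = j := Fin.ext (by omega)
    subst this; simp
  | succ d ih =>
    intro i j h
    have hj : (i : ℕ) + d < k := by omega
    set j' : Fin k := ⟨(i : ℕ) + d, hj⟩ with hj'
    have h1 := ih i j' rfl
    have h2 : f j' < f j := f.strictMono (by rw [Fin.lt_def]; show (i : ℕ) + d < j; omega)
    rw [Fin.lt_def] at h2
    omega

theorem emb3 {n : ℕ} (a b c : Fin n) (hab : a < b) (hbc : b < c) :
    ∃ f : Fin 3 ↪o Fin n, ∀ p : Fin 3,
      (f p : Fin n) = if (p : ℕ) = 0 then a else if (p : ℕ) = 1 then b else c := by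
  refine ⟨OrderEmbedding.ofStrictMono
    (fun t => if (t : ℕ) = 0 then a else if (t : ℕ) = 1 then b else c) ?_, fun p => rfl⟩
  intro x y h
  fin_cases x <;> fin_cases y <;> simp_all
  exact hab.trans hbc

theorem no213 {n : ℕ} {π : Equiv.Perm (Fin n)} (h : AvoidsPat π [2,1,3]) {a b c : Fin n}
    (hab : a < b) (hbc : b < c)
    (v1 : (π b : ℕ) < π a) (v2 : (π a : ℕ) < π c) : False := by
  obtain ⟨f, hf⟩ := emb3 a b c hab hbc
  apply h
  refine ⟨f, ?_⟩
  have v3 : (π b : ℕ) < π c := by omega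
  have key : ∀ p q : Fin 3, List.get [2,1,3] p < List.get [2,1,3] q ↔ π (f p) < π (f q) := by
    intro p q
    rw [Fin.lt_def]
    fin_cases p <;> fin_cases q <;>
      simp only [hf, List.get_eq_getElem] <;> norm_num <;> omega
  exact fun p q => key p q

theorem no132 {n : ℕ} {π : Equiv.Perm (Fin n)} (h : AvoidsPat π [1,3,2]) {a b c : Fin n}
    (hab : a < b) (hbc : b < c)
    (v1 : (π a : ℕ) < π c) (v2 : (π c : ℕ) < π b) : False := by
  obtain ⟨f, hf⟩ := emb3 a b c hab hbc
  apply h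
  refine ⟨f, ?_⟩
  have v3 : (π a : ℕ) < π b := by omega
  have key : ∀ p q : Fin 3, List.get [1,3,2] p < List.get [1,3,2] q ↔ π (f p) < π (f q) := by
    intro p q
    rw [Fin.lt_def]
    fin_cases p <;> fin_cases q <;>
      simp only [hf, List.get_eq_getElem] <;> norm_num <;> omega
  exact fun p q => key p q


/-- From avoidance of 132 and 213, ascending pairs determine everything. -/
theorem PP_of_avoids {n : ℕ} {π : Equiv.Perm (Fin n)}
    (h132 : AvoidsPat π [1,3,2]) (h213 : AvoidsPat π [2,1,3]) :
    ∀ i j : Fin n, (i : ℕ) ≤ j → (π i : ℕ) ≤ π j → (π j : ℕ) + (i : ℕ) = (π i : ℕ) + (j : ℕ) := by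
  intro i j hij hv
  rcases eq_or_lt_of_le hij with heq | hlt
  · have : i = j := Fin.ext heq
    subst this; omega
  rcases eq_or_lt_of_le hv with hveq | hvlt
  · have : i = j := π.injective (Fin.ext hveq)
    subst this; omega
  have hijf : i < j := by rwa [Fin.lt_def]
  have hvf : π i < π j := by rwa [Fin.lt_def]
  -- positions strictly between have values strictly between
  have hA : ∀ m : Fin n, i < m → m < j → π i < π m ∧ π m < π j := by
    intro m him hmj
    constructor
    · by_contra hc
      push_neg at hc
      have hne : π m ≠ π i := fun he => (by
        have : m = i := π.injective he
        subst this; exact absurd him (lt_irrefl _))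
      have : (π m : ℕ) < π i := by
        rw [Fin.le_def] at hc
        rcases Nat.lt_or_ge (π m : ℕ) (π i : ℕ) with h | h
        · exact h
        · exact absurd (Fin.ext (le_antisymm hc h)) hne
      exact no213 h213 him hmj this (by rw [Fin.lt_def] at hvf; omega)
    · by_contra hc
      push_neg at hc
      have hne : π m ≠ π j := fun he => (by
        have : m = j := π.injective he
        subst this; exact absurd hmj (lt_irrefl _))
      have : (π j : ℕ) < π m := by
        rw [Fin.le_def] at hc
        rcases Nat.lt_or_ge (π j : ℕ) (π m : ℕ) with h | h
        · exact h
        · exact absurd (Fin.ext (le_antisymm hc h)) hne.symm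
      exact no132 h132 him hmj (by rw [Fin.lt_def] at hvf; omega) this
  -- values strictly between sit at positions strictly between
  have hB : ∀ v : Fin n, π i < v → v < π j → i < π.symm v ∧ π.symm v < j := by
    intro v hiv hvj
    set m := π.symm v with hm
    have hπm : π m = v := π.apply_symm_apply v
    have hmi : m ≠ i := by
      intro he; rw [he] at hπm; rw [← hπm] at hiv; exact absurd hiv (lt_irrefl _)
    have hmj : m ≠ j := by
      intro he; rw [he] at hπm; rw [← hπm] at hvj; exact absurd hvj (lt_irrefl _)
    constructor
    · by_contra hc
      push_neg at hc
      have hmi' : m < i := lt_of_le_of_ne hc hmi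
      refine no213 h213 hmi' hijf ?_ ?_
      · rw [hπm]; rw [Fin.lt_def] at hiv; omega
      · rw [Fin.lt_def] at hvf; omega
    · by_contra hc
      push_neg at hc
      have hmj' : j < m := lt_of_le_of_ne hc (Ne.symm hmj)
      refine no132 h132 hijf hmj' ?_ ?_
      · rw [hπm]; rw [Fin.lt_def] at hiv; omega
      · rw [hπm]; rw [Fin.lt_def] at hvj; omega
  -- counting
  have himg : Finset.image π (Finset.Ioo i j) = Finset.Ioo (π i) (π j) := by
    ext v
    simp only [Finset.mem_image, Finset.mem_Ioo]
    constructor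
    · rintro ⟨m, ⟨h1, h2⟩, rfl⟩
      exact hA m h1 h2
    · rintro ⟨h1, h2⟩
      exact ⟨π.symm v, hB v h1 h2, π.apply_symm_apply v⟩
  have hcard := congrArg Finset.card himg
  rw [Finset.card_image_of_injective _ π.injective, Fin.card_Ioo, Fin.card_Ioo] at hcard
  rw [Fin.lt_def] at hijf hvf
  omega


section PPlemmas

variable {n : ℕ} {π : Equiv.Perm (Fin n)}

theorem avoid132_of_PP
    (hPP : ∀ i j : Fin n, (i : ℕ) ≤ j → (π i : ℕ) ≤ π j → (π j : ℕ) + (i:ℕ) = (π i : ℕ) + (j:ℕ)) :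
    AvoidsPat π [1,3,2] := by
  rintro ⟨f, hiff⟩
  set p0 : Fin ([1,3,2] : List ℕ).length := ⟨0, by norm_num⟩
  set p1 : Fin ([1,3,2] : List ℕ).length := ⟨1, by norm_num⟩
  set p2 : Fin ([1,3,2] : List ℕ).length := ⟨2, by norm_num⟩
  have v1 : π (f p0) < π (f p1) := (hiff p0 p1).mp (by norm_num)
  have v2 : π (f p0) < π (f p2) := (hiff p0 p2).mp (by norm_num)
  have v3 : π (f p2) < π (f p1) := (hiff p2 p1).mp (by norm_num)
  have m01 : f p0 < f p1 := f.strictMono (by rw [Fin.lt_def]; norm_num)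
  have m12 : f p1 < f p2 := f.strictMono (by rw [Fin.lt_def]; norm_num)
  have e1 := hPP (f p0) (f p1) (by rw [Fin.lt_def] at m01; omega) (by rw [Fin.lt_def] at v1; omega)
  have e2 := hPP (f p0) (f p2) (by rw [Fin.lt_def] at m01 m12; omega)
    (by rw [Fin.lt_def] at v2; omega)
  rw [Fin.lt_def] at v1 v2 v3 m01 m12
  omega

theorem avoid213_of_PP
    (hPP : ∀ i j : Fin n, (i : ℕ) ≤ j → (π i : ℕ) ≤ π j → (π j : ℕ) + (i:ℕ) = (π i : ℕ) + (j:ℕ)) :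
    AvoidsPat π [2,1,3] := by
  rintro ⟨f, hiff⟩
  set p0 : Fin ([2,1,3] : List ℕ).length := ⟨0, by norm_num⟩
  set p1 : Fin ([2,1,3] : List ℕ).length := ⟨1, by norm_num⟩
  set p2 : Fin ([2,1,3] : List ℕ).length := ⟨2, by norm_num⟩
  have v1 : π (f p1) < π (f p0) := (hiff p1 p0).mp (by norm_num)
  have v2 : π (f p0) < π (f p2) := (hiff p0 p2).mp (by norm_num)
  have v3 : π (f p1) < π (f p2) := (hiff p1 p2).mp (by norm_num)
  have m01 : f p0 < f p1 := f.strictMono (by rw [Fin.lt_def]; norm_num)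
  have m12 : f p1 < f p2 := f.strictMono (by rw [Fin.lt_def]; norm_num)
  have e1 := hPP (f p1) (f p2) (by rw [Fin.lt_def] at m12; omega) (by rw [Fin.lt_def] at v3; omega)
  have e2 := hPP (f p0) (f p2) (by rw [Fin.lt_def] at m01 m12; omega)
    (by rw [Fin.lt_def] at v2; omega)
  rw [Fin.lt_def] at v1 v2 v3 m01 m12
  omega

theorem sget (k : ℕ) (p : Fin (((List.range k).map (· + 1)).length)) :
    ((List.range k).map (· + 1)).get p = (p : ℕ) + 1 := by
  simp [List.get_eq_getElem]

theorem avoidK_of_PP_KK {k : ℕ} (hk : 2 ≤ k)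
    (hPP : ∀ i j : Fin n, (i : ℕ) ≤ j → (π i : ℕ) ≤ π j → (π j : ℕ) + (i:ℕ) = (π i : ℕ) + (j:ℕ))
    (hKK : ∀ i j : Fin n, (i : ℕ) ≤ j → (π i : ℕ) < π j → (j : ℕ) < (i : ℕ) + (k-1)) :
    AvoidsPat π ((List.range k).map (· + 1)) := by
  rintro ⟨f, hiff⟩
  have hlen : ((List.range k).map (· + 1)).length = k := by simp
  set p0 : Fin (((List.range k).map (· + 1)).length) := ⟨0, by omega⟩ with hp0
  set p1 : Fin (((List.range k).map (· + 1)).length) := ⟨k-1, by omega⟩ with hp1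
  have hv : π (f p0) < π (f p1) := (hiff p0 p1).mp (by rw [sget, sget]; simp [hp0, hp1]; omega)
  have hm : f p0 < f p1 := f.strictMono (by rw [Fin.lt_def]; simp [hp0, hp1]; omega)
  have h1 := hKK (f p0) (f p1) (by rw [Fin.lt_def] at hm; omega) (by rwa [Fin.lt_def] at hv)
  have h2 := orderEmb_le f (k-1) p0 p1 (by simp [hp0, hp1])
  omega

theorem KK_of_PP_avoidK {k : ℕ} (hk : 2 ≤ k)
    (hPP : ∀ i j : Fin n, (i : ℕ) ≤ j → (π i : ℕ) ≤ π j → (π j : ℕ) + (i:ℕ) = (π i : ℕ) + (j:ℕ))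
    (hav : AvoidsPat π ((List.range k).map (· + 1))) :
    ∀ i j : Fin n, (i : ℕ) ≤ j → (π i : ℕ) < π j → (j : ℕ) < (i : ℕ) + (k-1) := by
  intro i j hij hv
  by_contra hc
  push_neg at hc
  have hvij := hPP i j hij (le_of_lt hv)
  have hijlt : (i : ℕ) < j := by
    rcases Nat.lt_or_ge (i : ℕ) (j : ℕ) with h | h
    · exact h
    · exfalso; have : i = j := Fin.ext (by omega); subst this; omega
  -- each intermediate value sits at the shifted position
  have claim : ∀ t, (i : ℕ) + t ≤ (j : ℕ) → ∀ (h : (i : ℕ) + t < n),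
      (π ⟨(i : ℕ) + t, h⟩ : ℕ) = (π i : ℕ) + t := by
    intro t ht h
    have hvn : (π i : ℕ) + t < n := by
      have := (π j).isLt; omega
    obtain ⟨m, hπm⟩ : ∃ m, π m = ⟨(π i : ℕ) + t, hvn⟩ := ⟨π.symm _, π.apply_symm_apply _⟩
    have hπmval : (π m : ℕ) = (π i : ℕ) + t := by rw [hπm]
    have hm : (m : ℕ) = (i : ℕ) + t := by
      rcases Nat.lt_or_ge (m : ℕ) (i : ℕ) with hmi | hmi
      · have h2 := hPP m j (by omega) (by omega)
        omega
      · have h2 := hPP i m (by omega) (by omega)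
        omega
    have hfin : (⟨(i : ℕ) + t, h⟩ : Fin n) = m := Fin.ext (hm.symm)
    rw [hfin, hπmval]
  apply hav
  have hlen : ((List.range k).map (· + 1)).length = k := by simp
  have hbound : ∀ p : Fin (((List.range k).map (· + 1)).length), (i : ℕ) + (p : ℕ) < n := by
    intro p
    have hp : (p : ℕ) < k := by simpa using p.isLt
    have := j.isLt
    omega
  refine ⟨OrderEmbedding.ofStrictMono (fun p => ⟨(i : ℕ) + p, hbound p⟩) ?_, ?_⟩
  · intro x y hxy
    rw [Fin.lt_def] at hxy ⊢
    simp
    omega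
  · intro p q
    have hp : (p : ℕ) < k := by simpa using p.isLt
    have hq : (q : ℕ) < k := by simpa using q.isLt
    rw [sget, sget, Fin.lt_def]
    show _ ↔ ((π ⟨(i : ℕ) + (p : ℕ), hbound p⟩ : Fin n) : ℕ) <
      ((π ⟨(i : ℕ) + (q : ℕ), hbound q⟩ : Fin n) : ℕ)
    rw [claim (p : ℕ) (by omega) (hbound p), claim (q : ℕ) (by omega) (hbound q)]
    omega

end PPlemmas

noncomputable def toPerm {n : ℕ} (L : List ℕ) (hL : L.Perm (List.range n)) : Equiv.Perm (Fin n) :=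
  Equiv.ofBijective
    (fun i => ⟨L[(i : ℕ)]'(by rw [hL.length_eq, List.length_range]; exact i.isLt), by
      have hx : L[(i : ℕ)]'(by rw [hL.length_eq, List.length_range]; exact i.isLt) ∈ L :=
        List.getElem_mem _
      simpa using hL.mem_iff.mp hx⟩)
    (by
      have hnd : L.Nodup := hL.nodup_iff.mpr (List.nodup_range (n := n))
      refine Finite.injective_iff_bijective.mp ?_
      intro a b hab
      have h1 : L[(a : ℕ)]'(by rw [hL.length_eq, List.length_range]; exact a.isLt)
          = L[(b : ℕ)]'(by rw [hL.length_eq, List.length_range]; exact b.isLt) :=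
        congrArg Fin.val hab
      exact Fin.ext ((List.Nodup.getElem_inj_iff hnd).mp h1))

theorem toPerm_val {n : ℕ} (L : List ℕ) (hL : L.Perm (List.range n)) (i : Fin n) :
    ((toPerm L hL) i : ℕ) = L[(i : ℕ)]'(by rw [hL.length_eq, List.length_range]; exact i.isLt) :=
  rfl

theorem ofFn_perm {n : ℕ} (π : Equiv.Perm (Fin n)) :
    (List.ofFn (fun i => (π i : ℕ))).Perm (List.range n) := by
  apply List.perm_of_nodup_nodup_toFinset_eq
  · exact List.nodup_ofFn.mpr (Fin.val_injective.comp π.injective)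
  · exact List.nodup_range
  · ext x
    simp only [List.mem_toFinset, List.mem_ofFn, List.mem_range, Set.mem_range]
    constructor
    · rintro ⟨i, rfl⟩; exact (π i).isLt
    · intro hx; exact ⟨π.symm ⟨x, hx⟩, by simp⟩


end AvoidTilingAux

open AvoidTilingAux in
theorem avoid_12k_132_213_equiv_tilings (n k : ℕ) (hn : 1 ≤ n) (hk : 2 ≤ k) :
    Nonempty
      ({π : Equiv.Perm (Fin n) //
          AvoidsPat π ((List.range k).map (· + 1)) ∧ AvoidsPat π [1, 3, 2] ∧
          AvoidsPat π [2, 1, 3]} ≃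
        {l : List ℕ // l.sum = n ∧ ∀ x ∈ l, 1 ≤ x ∧ x ≤ k - 1}) := by
  classical
  have hK1 : 1 ≤ k - 1 := by omega
  have hperm : ∀ (l : List ℕ), l.sum = n → (Pl l).Perm (List.range n) :=
    fun l hl => hl ▸ Pl_perm l
  -- properties of the permutation built from a composition
  have hprops : ∀ b : {l : List ℕ // l.sum = n ∧ ∀ x ∈ l, 1 ≤ x ∧ x ≤ k - 1},
      AvoidsPat (toPerm (Pl b.1) (hperm b.1 b.2.1)) ((List.range k).map (· + 1)) ∧
      AvoidsPat (toPerm (Pl b.1) (hperm b.1 b.2.1)) [1, 3, 2] ∧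
      AvoidsPat (toPerm (Pl b.1) (hperm b.1 b.2.1)) [2, 1, 3] := by
    rintro ⟨l, hsum, hpart⟩
    set π := toPerm (Pl l) (hperm l hsum) with hπ
    have hlenPl : (Pl l).length = n := by rw [Pl_length, hsum]
    have hval : ∀ i : Fin n, (π i : ℕ) = (Pl l)[(i : ℕ)]'(by omega) := fun i => rfl
    have hPK := Pl_PK (K := k - 1) hK1 l (fun x hx => (hpart x hx).2)
    have hPP : ∀ i j : Fin n, (i : ℕ) ≤ j → (π i : ℕ) ≤ π j →
        (π j : ℕ) + (i : ℕ) = (π i : ℕ) + (j : ℕ) := by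
      intro i j hij hv
      rw [hval i, hval j] at hv ⊢
      exact (hPK (i : ℕ) (j : ℕ) (by omega) (by omega) hij hv).1
    have hKK : ∀ i j : Fin n, (i : ℕ) ≤ j → (π i : ℕ) < π j →
        (j : ℕ) < (i : ℕ) + (k - 1) := by
      intro i j hij hv
      rw [hval i, hval j] at hv
      exact (hPK (i : ℕ) (j : ℕ) (by omega) (by omega) hij (le_of_lt hv)).2
    exact ⟨avoidK_of_PP_KK hk hPP hKK, avoid132_of_PP hPP, avoid213_of_PP hPP⟩
  refine ⟨(Equiv.ofBijective
    (fun b => ⟨toPerm (Pl b.1) (hperm b.1 b.2.1), hprops b⟩) ⟨?_, ?_⟩).symm⟩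
  · -- injective
    rintro ⟨l₁, hsum₁, hpart₁⟩ ⟨l₂, hsum₂, hpart₂⟩ hG
    have hpe : toPerm (Pl l₁) (hperm l₁ hsum₁) = toPerm (Pl l₂) (hperm l₂ hsum₂) :=
      congrArg Subtype.val hG
    have hlen₁ : (Pl l₁).length = n := by rw [Pl_length, hsum₁]
    have hlen₂ : (Pl l₂).length = n := by rw [Pl_length, hsum₂]
    have hlists : Pl l₁ = Pl l₂ := by
      apply List.ext_getElem (by omega)
      intro i h1 h2
      have hi : i < n := by omega
      have := congrArg (fun σ : Equiv.Perm (Fin n) => ((σ ⟨i, hi⟩ : Fin n) : ℕ)) hpe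
      simpa [toPerm_val] using this
    exact Subtype.ext (Pl_inj l₁ l₂ (fun x hx => (hpart₁ x hx).1)
      (fun x hx => (hpart₂ x hx).1) (by rw [hsum₁, hsum₂]) hlists)
  · -- surjective
    rintro ⟨π, h1, h2, h3⟩
    have hPP := PP_of_avoids h2 h3
    have hKK := KK_of_PP_avoidK hk hPP h1
    set L := List.ofFn (fun i : Fin n => (π i : ℕ)) with hLdef
    have hLperm : L.Perm (List.range n) := ofFn_perm π
    have hLlen : L.length = n := by simp [hLdef]
    have hget : ∀ i (h : i < L.length), L[i]'h = (π ⟨i, by omega⟩ : ℕ) := by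
      intro i h
      simp [hLdef]
    obtain ⟨l, hsum, hparts, hPl⟩ := Pl_surj (K := k - 1) hK1 n L hLperm
      (by
        intro i j hi hj hij hval
        rw [hget i hi, hget j hj] at hval ⊢
        exact hPP ⟨i, by omega⟩ ⟨j, by omega⟩ hij hval)
      (by
        intro i j hi hj hij hval
        rw [hget i hi, hget j hj] at hval
        exact hKK ⟨i, by omega⟩ ⟨j, by omega⟩ hij hval)
    refine ⟨⟨l, hsum, hparts⟩, ?_⟩
    apply Subtype.ext
    show toPerm (Pl l) (hperm l hsum) = π
    apply Equiv.ext
    intro i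
    apply Fin.ext
    rw [toPerm_val]
    simp only [hPl]
    rw [hget (i : ℕ) (by omega)]
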